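/- Every in-round oriented graph has dichromatic number at most 2; moreover, for every vertex x there is a partition of the vertex set into two sets, each inducing an acyclic digraph, such that {x} ∪ x⁺ is contained in one of the two sets. -/
import Mathlib


/-- `A` is the arc relation of an oriented graph: no loops and no digons. -/
def IsOriented {V : Type*} (A : V → V → Prop) : Prop :=
  Irreflexive A ∧ ∀ x y, A x y → ¬ A y x

/-- `D` is strong: a directed path between each ordered pair of vertices. -/
def IsStrong {V : Type*} (A : V → V → Prop) : Prop :=
  ∀ x y : V, Relation.ReflTransGen A x y

/-- The set `S` induces a strong subdigraph (all paths staying inside `S`). -/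
def StrongOn {V : Type*} (A : V → V → Prop) (S : Set V) : Prop :=
  ∀ x ∈ S, ∀ y ∈ S, Relation.ReflTransGen (fun a b => a ∈ S ∧ b ∈ S ∧ A a b) x y

/-- The set `S` induces a tournament. -/
def TournamentOn {V : Type*} (A : V → V → Prop) (S : Set V) : Prop :=
  ∀ x ∈ S, ∀ y ∈ S, x ≠ y → A x y ∨ A y x

/-- The set `S` induces an acyclic digraph. -/
def AcyclicOn {V : Type*} (A : V → V → Prop) (S : Set V) : Prop :=
  ∀ x : V, ¬ Relation.TransGen (fun a b => a ∈ S ∧ b ∈ S ∧ A a b) x x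

/-- The set `S` induces a semicomplete digraph. -/
def SemicompleteOn {V : Type*} (A : V → V → Prop) (S : Set V) : Prop :=
  ∀ x ∈ S, ∀ y ∈ S, x ≠ y → A x y ∨ A y x

/-- `z` lies strictly inside the cyclic interval `]x,y[` for the cyclic order `σ`. -/
def CycBtw {V : Type*} [Fintype V] (σ : V ≃ Fin (Fintype.card V)) (x z y : V) : Prop :=
  0 < (σ z - σ x).val ∧ (σ z - σ x).val < (σ y - σ x).val

/-- In-round: a cyclic order such that for every arc `xy` and `z ∈ ]x,y[`, `zy` is an arc. -/
def InRound {V : Type*} [Fintype V] (A : V → V → Prop) : Prop :=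
  ∃ σ : V ≃ Fin (Fintype.card V), ∀ x y z : V, A x y → CycBtw σ x z y → A z y

/-- Out-round: a cyclic order such that for every arc `xy` and `z ∈ ]x,y[`, `xz` is an arc. -/
def OutRound {V : Type*} [Fintype V] (A : V → V → Prop) : Prop :=
  ∃ σ : V ≃ Fin (Fintype.card V), ∀ x y z : V, A x y → CycBtw σ x z y → A x z

/-- Every out-neighbourhood induces a transitive tournament. -/
def LocallyOutTransitive {V : Type*} (A : V → V → Prop) : Prop :=
  ∀ x : V, TournamentOn A {y | A x y} ∧ AcyclicOn A {y | A x y}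

/-- A hub: a nonempty set inducing a strong subdigraph, all of whose vertices are
in-neighbours of some vertex outside of it. -/
def Hub {V : Type*} (A : V → V → Prop) (H : Set V) : Prop :=
  H.Nonempty ∧ StrongOn A H ∧ ∃ x ∉ H, ∀ h ∈ H, A h x

/-- Locally semicomplete digraph: no loops, and every out- and in-neighbourhood
induces a semicomplete digraph (digons are allowed). -/
def LocallySemicomplete {V : Type*} (A : V → V → Prop) : Prop :=
  Irreflexive A ∧ (∀ x : V, SemicompleteOn A {y | A x y}) ∧
    ∀ x : V, SemicompleteOn A {y | A y x}

/-- The underlying undirected graph is connected. -/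
def ConnectedDigraph {V : Type*} (A : V → V → Prop) : Prop :=
  ∀ x y : V, Relation.ReflTransGen (fun a b => A a b ∨ A b a) x y

/-- A weak hub: a nonempty set inducing a strong subdigraph that is strictly
in-dominated or strictly out-dominated by some vertex outside of it. -/
def WeakHub {V : Type*} (A : V → V → Prop) (X : Set V) : Prop :=
  X.Nonempty ∧ StrongOn A X ∧
    ∃ x ∉ X, (∀ u ∈ X, A u x ∧ ¬ A x u) ∨ ∀ u ∈ X, A x u ∧ ¬ A u x

/-- A set `X` is mixed if some outside vertex has both an out-neighbour and an
in-neighbour in `X`. -/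
def MixedSet {V : Type*} (A : V → V → Prop) (X : Set V) : Prop :=
  ∃ x ∉ X, (∃ u ∈ X, A x u) ∧ ∃ v ∈ X, A v x

/-- `X` is an inclusion-wise maximal weak hub. -/
def MaxWeakHub {V : Type*} (A : V → V → Prop) (X : Set V) : Prop :=
  WeakHub A X ∧ ∀ Y : Set V, WeakHub A Y → X ⊆ Y → Y = X

private lemma subval_aux {n : ℕ} (u v : Fin n) :
    (u - v).val = if v.val ≤ u.val then u.val - v.val else u.val + n - v.val := by
  have hu := u.is_lt
  have hv := v.is_lt
  have h : (u - v).val = (n - v.val + u.val) % n := by rw [Fin.sub_def]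
  rw [h]
  rcases le_or_gt v.val u.val with hle | hlt
  · rw [if_pos hle]
    have : n - v.val + u.val = (u.val - v.val) + n := by omega
    rw [this, Nat.add_mod_right, Nat.mod_eq_of_lt (by omega)]
  · rw [if_neg (by omega), Nat.mod_eq_of_lt (by omega)]; omega

private lemma acyclic_of_incr {V : Type*} (r : V → V → Prop) (d : V → ℕ)
    (h : ∀ p q, r p q → d p < d q) : ∀ a : V, ¬ Relation.TransGen r a a := by
  have mono : ∀ a b : V, Relation.TransGen r a b → d a < d b := by
    intro a b hab
    induction hab with
    | single h1 => exact h _ _ h1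
    | tail _ h2 ih => exact ih.trans (h _ _ h2)
  exact fun a ha => lt_irrefl _ (mono a a ha)

theorem stmt7 {V : Type*} [Fintype V] (A : V → V → Prop)
    (hor : IsOriented A) (hround : InRound A) :
    ∀ x : V, ∃ S : Set V, AcyclicOn A S ∧ AcyclicOn A Sᶜ ∧
      insert x {y | A x y} ⊆ S := by
  obtain ⟨hirr, hdig⟩ := hor
  obtain ⟨σ, hσ⟩ := hround
  intro x
  set S : Set V := insert x {y | A x y} with hSdef
  have hval : ∀ u v : V, (σ u).val = (σ v).val → u = v := fun u v h =>
    σ.injective (Fin.ext h)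
  have hvne : ∀ u v : V, u ≠ v → (σ u).val ≠ (σ v).val := fun u v h h' => h (hval u v h')
  have hd0 : ∀ v : V, (σ v - σ x).val = 0 → v = x := by
    intro v hv
    have h2 := (σ v).is_lt
    have h3 := (σ x).is_lt
    apply hval
    rw [subval_aux] at hv; split_ifs at hv <;> omega
  have key1 : ∀ p q : V, p ∈ S → q ∈ S → A p q → (σ p - σ x).val < (σ q - σ x).val := by
    intro p q hp hq hA
    have hpq : p ≠ q := fun h => hirr p (h ▸ hA)
    rcases hq with hq | hq
    · exfalso
      subst hq
      rcases hp with hp | hp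
      · exact hirr q (hp ▸ hA)
      · exact hdig q p hp hA
    · have hqx : q ≠ x := fun h => hirr x (h ▸ hq)
      have hdq : 0 < (σ q - σ x).val := Nat.pos_of_ne_zero (fun h => hqx (hd0 q h))
      rcases hp with hp | hp
      · subst hp
        rw [subval_aux]; simp; omega
      · have hpx : p ≠ x := fun h => hirr x (h ▸ hp)
        by_contra hcon
        push_neg at hcon
        rcases eq_or_lt_of_le hcon with he | hlt
        · apply hpq
          apply hval
          have h1 := subval_aux (σ p) (σ x)
          have h2 := subval_aux (σ q) (σ x)
          have := (σ p).is_lt; have := (σ q).is_lt; have := (σ x).is_lt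
          rw [h1, h2] at he; split_ifs at he <;> omega
        · exact hdig p q hA (hσ x p q hp ⟨hdq, hlt⟩)
  have key2 : ∀ p q : V, p ∉ S → q ∉ S → A p q → (σ p - σ x).val < (σ q - σ x).val := by
    intro p q hp hq hA
    have hpq : p ≠ q := fun h => hirr p (h ▸ hA)
    have hpx : p ≠ x := fun h => hp (Or.inl h)
    have hqx : q ≠ x := fun h => hq (Or.inl h)
    have hAxq : ¬ A x q := fun h => hq (Or.inr h)
    have hdp : 0 < (σ p - σ x).val := Nat.pos_of_ne_zero (fun h => hpx (hd0 p h))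
    have hdq : 0 < (σ q - σ x).val := Nat.pos_of_ne_zero (fun h => hqx (hd0 q h))
    by_contra hcon
    push_neg at hcon
    rcases eq_or_lt_of_le hcon with he | hlt
    · apply hpq
      apply hval
      have h1 := subval_aux (σ p) (σ x)
      have h2 := subval_aux (σ q) (σ x)
      have := (σ p).is_lt; have := (σ q).is_lt; have := (σ x).is_lt
      rw [h1, h2] at he; split_ifs at he <;> omega
    · apply hAxq
      apply hσ p q x hA
      have h1 := subval_aux (σ p) (σ x)
      have h2 := subval_aux (σ q) (σ x)
      have h3 := subval_aux (σ x) (σ p)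
      have h4 := subval_aux (σ q) (σ p)
      have := (σ p).is_lt; have := (σ q).is_lt; have := (σ x).is_lt
      have hne1 := hvne p x hpx
      have hne2 := hvne q x hqx
      have hne3 := hvne p q hpq
      constructor
      · rw [h3]
        rw [h1] at hdp
        split_ifs at hdp ⊢ <;> omega
      · rw [h3, h4]
        rw [h1] at hlt hdp
        rw [h2] at hlt hdq
        split_ifs at hlt hdp hdq ⊢ <;> omega
  refine ⟨S, ?_, ?_, subset_rfl⟩
  · exact acyclic_of_incr _ (fun v => (σ v - σ x).val)
      (fun p q ⟨hp, hq, hA⟩ => key1 p q hp hq hA)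
  · exact acyclic_of_incr _ (fun v => (σ v - σ x).val)
      (fun p q ⟨hp, hq, hA⟩ => key2 p q hp hq hA)
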